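/- Suppose λ > ℵ₀ is a cardinal with λ^{<λ} = λ and ε < λ is a limit ordinal. If a forcing notion P satisfies *^ε_λ, then P satisfies the λ⁺-chain condition: for every sequence ⟨p_i : i < λ⁺⟩ of elements of P there exist i < j < λ⁺ such that p_i and p_j are compatible (have a common upper bound in P); equivalently, every antichain of P has cardinality at most λ. -/

import Mathlib

open Cardinal

/-- `C` is a club (closed unbounded set) in the ordinal `κ`. -/
def IsClubIn (κ : Ordinal) (C : Set Ordinal) : Prop :=
  C ⊆ Set.Iio κ ∧ (∀ a < κ, ∃ b ∈ C, a < b) ∧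
    ∀ δ, δ < κ → δ ≠ 0 → (∀ a < δ, ∃ b ∈ C, a < b ∧ b < δ) → δ ∈ C

namespace StarCCAux

universe u v

open Ordinal Set

/-- choice of a next element of an unbounded set / above a point -/
noncomputable def nxt (κ : Ordinal.{u}) (S : Set Ordinal.{u})
    (hS : ∀ a < κ, ∃ b ∈ S, a < b) (s : Ordinal.{u}) : Ordinal.{u} :=
  if hs : s < κ then (hS s hs).choose else s + 1

theorem nxt_gt (κ S hS) (s : Ordinal.{u}) : s < nxt κ S hS s := by
  unfold nxt
  split
  · exact (hS s ‹_›).choose_spec.2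
  · exact Order.lt_succ s

theorem nxt_mem (κ S hS) (s : Ordinal.{u}) (hs : s < κ) : nxt κ S hS s ∈ S := by
  unfold nxt
  rw [dif_pos hs]
  exact (hS s hs).choose_spec.1

section Lam

variable {lam : Cardinal.{u}}

theorem card_le_of_lt_succ_ord {o : Ordinal.{u}} (h : o < (Order.succ lam).ord) :
    o.card ≤ lam :=
  Order.lt_succ_iff.1 (Cardinal.lt_ord.1 h)

theorem succ_ord_cof (_hlam : ℵ₀ < lam) : (Order.succ lam).ord.cof = Order.succ lam :=
  (isRegular_succ _hlam.le).cof_eq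

theorem succ_ord_isLimit (hlam : ℵ₀ < lam) : Order.IsSuccLimit (Order.succ lam).ord :=
  Cardinal.isSuccLimit_ord (le_trans hlam.le (Order.le_succ lam))

/-- The sequence used to build a closure point of cofinality `lam`. -/
noncomputable def seqX (nx g : Ordinal.{u} → Ordinal.{u}) : Ordinal.{u} → Ordinal.{u} :=
  Ordinal.lt_wf.fix fun α ih => nx (Ordinal.bsup α fun β hβ => g (ih β hβ))

theorem seqX_eq (nx g : Ordinal.{u} → Ordinal.{u}) (α : Ordinal.{u}) :
    seqX nx g α = nx (Ordinal.bsup α fun β _ => g (seqX nx g β)) :=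
  Ordinal.lt_wf.fix_eq _ α

/-- Build a point of `D` of cofinality `lam` closed under `h`. -/
theorem exists_closure_point (hlam : ℵ₀ < lam) (hregl : lam.IsRegular)
    (D : Set Ordinal.{u}) (hD : IsClubIn (Order.succ lam).ord D)
    (h : Ordinal.{u} → Ordinal.{u})
    (hh : ∀ a < (Order.succ lam).ord, h a < (Order.succ lam).ord) :
    ∃ δ ∈ D, δ.cof = lam ∧ δ < (Order.succ lam).ord ∧ ∀ a < δ, h a < δ := by
  set κ := (Order.succ lam).ord with hκdef
  have hκlim : Order.IsSuccLimit κ := succ_ord_isLimit hlam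
  have hκcof : κ.cof = Order.succ lam := succ_ord_cof hlam
  set nx := nxt κ D hD.2.1 with hnxdef
  have hnxκ : ∀ s < κ, nx s < κ := fun s hs => hD.1 (nxt_mem κ D hD.2.1 s hs)
  -- the helper function g
  set g : Ordinal.{u} → Ordinal.{u} :=
    fun s => max (s + 1) ((Ordinal.bsup (s + 1) fun a _ => h a) + 1) with hgdef
  have hg1 : ∀ s, s < g s := fun s => lt_of_lt_of_le (Order.lt_succ s) (le_max_left _ _)
  have hgmono : ∀ s t, s ≤ t → g s ≤ g t := by
    intro s t hst
    apply max_le_max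
    · exact add_le_add_left hst 1
    · apply add_le_add_left _ 1
      exact Ordinal.bsup_le fun a ha =>
        Ordinal.le_bsup _ a (ha.trans_le (add_le_add_left hst 1))
  have hgh : ∀ a s, a ≤ s → h a < g s := by
    intro a s has
    have h1 : h a ≤ Ordinal.bsup (s + 1) fun a _ => h a :=
      Ordinal.le_bsup _ a (lt_of_le_of_lt has (Order.lt_succ s))
    exact lt_of_le_of_lt h1 (lt_of_lt_of_le (Order.lt_succ _) (le_max_right _ _))
  have hgκ : ∀ s < κ, g s < κ := by
    intro s hs
    apply max_lt (hκlim.succ_lt hs)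
    apply hκlim.succ_lt
    apply Ordinal.bsup_lt_ord
    · rw [hκcof]
      exact lt_of_le_of_lt (card_le_of_lt_succ_ord (hκlim.succ_lt hs)) (Order.lt_succ lam)
    · exact fun a ha => hh a (ha.trans (hκlim.succ_lt hs))
  set x := seqX nx g with hxdef
  set x' : Ordinal.{u} → Ordinal.{u} := fun α => Ordinal.bsup α fun β _ => g (x β) with hx'def
  have hxeq : ∀ α, x α = nx (x' α) := fun α => seqX_eq nx g α
  have hx'x : ∀ α, x' α < x α := fun α => by rw [hxeq]; exact nxt_gt _ _ _ _
  have hgx' : ∀ β α, β < α → g (x β) ≤ x' α := fun β α hβα => Ordinal.le_bsup _ β hβα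
  have hxmono : ∀ β α, β < α → x β < x α := fun β α hβα =>
    lt_trans (lt_of_lt_of_le (hg1 (x β)) (hgx' β α hβα)) (hx'x α)
  have hx'mono : ∀ β α, β < α → x' β < x' α := fun β α hβα =>
    lt_of_lt_of_le (lt_trans (hx'x β) (hg1 (x β))) (hgx' β α hβα)
  have hnorm : Order.IsNormal x' := by
    refine Order.isNormal_iff.2 ⟨?_, ?_⟩
    · exact fun a b hab => hx'mono a b hab
    · intro o ho a
      · intro H
        apply Ordinal.bsup_le
        intro β hβ
        exact le_trans (hgx' β (β + 1) (Order.lt_succ β)) (H (β + 1) (ho.succ_lt hβ))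
  -- boundedness below κ
  have hbnd : ∀ α, α ≤ lam.ord → x' α < κ := by
    intro α
    induction α using Ordinal.induction with
    | h α IH =>
      intro hα
      apply Ordinal.bsup_lt_ord
      · rw [hκcof]
        calc α.card ≤ lam.ord.card := Ordinal.card_le_card hα
        _ = lam := Cardinal.card_ord lam
        _ < Order.succ lam := Order.lt_succ lam
      · intro β hβ
        have hβ' : β ≤ lam.ord := le_of_lt (lt_of_lt_of_le hβ hα)
        have hx'β : x' β < κ := IH β hβ hβ'
        have : x β < κ := by rw [hxeq]; exact hnxκ _ hx'β
        exact hgκ _ this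
  have hxκ : ∀ α ≤ lam.ord, x α < κ := fun α hα => by
    rw [hxeq]; exact hnxκ _ (hbnd α hα)
  have hxD : ∀ α ≤ lam.ord, x α ∈ D := fun α hα => by
    rw [hxeq]; exact nxt_mem κ D hD.2.1 _ (hbnd α hα)
  have hlamlim : Order.IsSuccLimit lam.ord := Cardinal.isSuccLimit_ord hlam.le
  refine ⟨x' lam.ord, ?_, ?_, hbnd lam.ord le_rfl, ?_⟩
  · -- membership in D via closedness
    apply hD.2.2 _ (hbnd lam.ord le_rfl)
    · intro h0
      have := hx'mono 0 lam.ord hlamlim.pos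
      rw [h0] at this
      exact absurd this (not_lt_of_ge zero_le)
    · intro a ha
      obtain ⟨β, hβ, hab⟩ := (Ordinal.lt_bsup _).1 ha
      have hβ1 : β + 1 < lam.ord := hlamlim.succ_lt hβ
      refine ⟨x (β + 1), hxD _ hβ1.le, ?_, ?_⟩
      · exact lt_trans (lt_of_lt_of_le hab (hgx' β (β + 1) (Order.lt_succ β))) (hx'x (β + 1))
      · exact lt_of_lt_of_le (lt_of_lt_of_le (hg1 _) (hgx' (β + 1) ((β + 1) + 1) (Order.lt_succ _)))
          (hx'mono ((β + 1) + 1) lam.ord (hlamlim.succ_lt hβ1)).le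
  · -- cofinality
    rw [Ordinal.cof_map_of_isNormal hnorm hlamlim, hregl.cof_eq]
  · -- closure under h
    intro a ha
    obtain ⟨β, hβ, hab⟩ := (Ordinal.lt_bsup _).1 ha
    have hβ1 : β + 1 < lam.ord := hlamlim.succ_lt hβ
    have hβ2 : (β + 1) + 1 < lam.ord := hlamlim.succ_lt hβ1
    have haxs : a < x (β + 1) :=
      lt_trans (lt_of_lt_of_le hab (hgx' β (β + 1) (Order.lt_succ β))) (hx'x (β + 1))
    calc h a < g (x (β + 1)) := hgh a _ haxs.le
    _ ≤ x' ((β + 1) + 1) := hgx' (β + 1) ((β + 1) + 1) (Order.lt_succ _)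
    _ ≤ x' lam.ord := (hx'mono ((β + 1) + 1) lam.ord hβ2).le


/-- a choice of next element of `C ζ hζ` above `s` -/
noncomputable def nxtF {κ ε : Ordinal.{u}} (C : ∀ ζ, ζ < ε → Set Ordinal.{u})
    (hC : ∀ ζ hζ, IsClubIn κ (C ζ hζ)) (ζ : Ordinal.{u}) (hζ : ζ < ε) :
    Ordinal.{u} → Ordinal.{u} :=
  nxt κ (C ζ hζ) (hC ζ hζ).2.1

theorem isClubIn_inter (hlam : ℵ₀ < lam) {ε : Ordinal.{u}} (hεlt : ε < lam.ord)
    {E : Set Ordinal.{u}} (hE : IsClubIn (Order.succ lam).ord E)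
    {C : ∀ ζ, ζ < ε → Set Ordinal.{u}}
    (hC : ∀ ζ hζ, IsClubIn (Order.succ lam).ord (C ζ hζ)) :
    IsClubIn (Order.succ lam).ord (E ∩ {β | ∀ ζ (hζ : ζ < ε), β ∈ C ζ hζ}) := by
  set κ := (Order.succ lam).ord with hκdef
  have hκlim : Order.IsSuccLimit κ := succ_ord_isLimit hlam
  have hκcof : κ.cof = Order.succ lam := succ_ord_cof hlam
  set nE := nxt κ E hE.2.1 with hnEdef
  set nC := nxtF C hC with hnCdef
  refine ⟨fun β hβ => hE.1 hβ.1, ?_, ?_⟩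
  · -- unboundedness
    intro a ha
    set step : Ordinal.{u} → Ordinal.{u} :=
      fun s => max (nE s) (Ordinal.bsup ε fun ζ hζ => nC ζ hζ s) + 1 with hstepdef
    have hstepκ : ∀ s < κ, step s < κ := by
      intro s hs
      apply hκlim.succ_lt
      apply max_lt (hE.1 (nxt_mem κ E hE.2.1 s hs))
      apply Ordinal.bsup_lt_ord
      · rw [hκcof]
        exact lt_trans (Cardinal.lt_ord.1 hεlt) (Order.lt_succ lam)
      · exact fun ζ hζ => (hC ζ hζ).1 (nxt_mem κ (C ζ hζ) (hC ζ hζ).2.1 s hs)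
    have hstepgt : ∀ s, s < step s :=
      fun s => lt_of_lt_of_le (lt_of_lt_of_le (nxt_gt κ E hE.2.1 s) (le_max_left _ _))
        (Order.le_succ _)
    have hstepE : ∀ s, nE s < step s :=
      fun s => lt_of_le_of_lt (le_max_left _ _) (Order.lt_succ _)
    have hstepC : ∀ s ζ hζ, nC ζ hζ s < step s := fun s ζ hζ =>
      lt_of_le_of_lt (le_trans (Ordinal.le_bsup _ ζ hζ) (le_max_right _ _)) (Order.lt_succ _)
    set y : ℕ → Ordinal.{u} := fun n => step^[n] (a + 1) with hydef
    have hy0 : y 0 = a + 1 := rfl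
    have hysucc : ∀ n, y (n + 1) = step (y n) := fun n =>
      Function.iterate_succ_apply' step n (a + 1)
    have hyκ : ∀ n, y n < κ := by
      intro n
      induction n with
      | zero => exact hκlim.succ_lt ha
      | succ n ih => rw [hysucc]; exact hstepκ _ ih
    have hymono : ∀ n, y n < y (n + 1) := fun n => by rw [hysucc]; exact hstepgt _
    set δ : Ordinal.{u} := ⨆ n, y n with hδdef
    have hyδ : ∀ n, y n ≤ δ := fun n => Ordinal.le_iSup y n
    have hδκ : δ < κ := by
      apply Ordinal.iSup_lt_ord_lift _ hyκ
      rw [Cardinal.mk_nat, Cardinal.lift_aleph0, hκcof]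
      exact lt_trans hlam (Order.lt_succ lam)
    have haδ : a < δ := lt_of_lt_of_le (Order.lt_succ a) (hyδ 0)
    have hδ0 : δ ≠ 0 := fun h0 => by
      rw [h0] at haδ; exact absurd haδ (not_lt_of_ge zero_le)
    have hlimpt : ∀ a' < δ, ∃ n, a' < y n := by
      intro a' ha'
      exact Ordinal.lt_iSup_iff.1 ha'
    refine ⟨δ, ⟨?_, ?_⟩, haδ⟩
    · apply hE.2.2 δ hδκ hδ0
      intro a' ha'
      obtain ⟨n, hn⟩ := hlimpt a' ha'
      refine ⟨nE (y n), nxt_mem κ E hE.2.1 _ (hyκ n), lt_trans hn (nxt_gt κ E hE.2.1 _), ?_⟩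
      exact lt_of_lt_of_le (by rw [hysucc]; exact hstepE (y n)) (hyδ (n + 1))
    · intro ζ hζ
      apply (hC ζ hζ).2.2 δ hδκ hδ0
      intro a' ha'
      obtain ⟨n, hn⟩ := hlimpt a' ha'
      refine ⟨nC ζ hζ (y n), nxt_mem κ (C ζ hζ) (hC ζ hζ).2.1 _ (hyκ n),
        lt_trans hn (nxt_gt κ (C ζ hζ) (hC ζ hζ).2.1 _), ?_⟩
      calc nC ζ hζ (y n) < step (y n) := hstepC (y n) ζ hζ
      _ = y (n + 1) := (hysucc n).symm
      _ ≤ δ := hyδ (n + 1)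
  · -- closedness
    intro δ hδκ hδ0 hcl
    constructor
    · apply hE.2.2 δ hδκ hδ0
      intro a ha
      obtain ⟨b, hb, h1, h2⟩ := hcl a ha
      exact ⟨b, hb.1, h1, h2⟩
    · intro ζ hζ
      apply (hC ζ hζ).2.2 δ hδκ hδ0
      intro a ha
      obtain ⟨b, hb, h1, h2⟩ := hcl a ha
      exact ⟨b, hb.2 ζ hζ, h1, h2⟩


theorem isRegular_of_powerlt (hlam : ℵ₀ < lam) (hpow : lam ^< lam = lam) :
    lam.IsRegular := by
  refine ⟨hlam.le, ?_⟩
  by_contra hlt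
  push_neg at hlt
  have h1 : lam < lam ^ lam.ord.cof := Cardinal.lt_power_cof hlam.le
  have h2 : lam ^ lam.ord.cof ≤ lam ^< lam := Cardinal.le_powerlt lam hlt
  rw [hpow] at h2
  exact absurd (lt_of_lt_of_le h1 h2) (lt_irrefl lam)

theorem key_pair (hlam : ℵ₀ < lam) (hpow : lam ^< lam = lam)
    {ε : Ordinal.{u}} (hεlim : Order.IsSuccLimit ε) (hεlt : ε < lam.ord)
    {D : Set Ordinal.{u}} (hD : IsClubIn (Order.succ lam).ord D)
    (f : Ordinal.{u} → Ordinal.{u} → Ordinal.{u})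
    (hf : ∀ ζ < ε, ∀ i ∈ D, i.cof = lam → f ζ i < i) :
    ∃ i ∈ D, ∃ j ∈ D, i.cof = lam ∧ j.cof = lam ∧ i < j ∧ ∀ ζ < ε, f ζ i = f ζ j := by
  set κ := (Order.succ lam).ord with hκdef
  have hκlim : Order.IsSuccLimit κ := succ_ord_isLimit hlam
  have hκcof : κ.cof = Order.succ lam := succ_ord_cof hlam
  have hregl : lam.IsRegular := isRegular_of_powerlt hlam hpow
  set b : Ordinal.{u} → Ordinal.{u} :=
    fun i => (Ordinal.bsup ε fun ζ _ => f ζ i) + 1 with hbdef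
  have hblt : ∀ i ∈ D, i.cof = lam → b i < i := by
    intro i hiD hcof
    have hilim : Order.IsSuccLimit i := Ordinal.aleph0_le_cof.1 (by rw [hcof]; exact hlam.le)
    apply hilim.succ_lt
    apply Ordinal.bsup_lt_ord
    · rw [hcof]; exact Cardinal.lt_ord.1 hεlt
    · exact fun ζ hζ => hf ζ hζ i hiD hcof
  have hfb : ∀ i, ∀ ζ, ζ < ε → f ζ i < b i := fun i ζ hζ =>
    lt_of_le_of_lt (Ordinal.le_bsup _ ζ hζ) (Order.lt_succ _)
  by_cases hA : ∃ a < κ, ∀ c < κ, ∃ i, (i ∈ D ∧ i.cof = lam ∧ b i ≤ a) ∧ c ≤ i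
  · obtain ⟨a, haκ, hunb⟩ := hA
    set e := (Ordinal.ToType.mk : Set.Iio κ ≃o κ.ToType) with hedef
    set j' : κ.ToType → Ordinal.{u} := fun x => ((e.symm x : Set.Iio κ) : Ordinal.{u})
      with hj'def
    have hj'κ : ∀ x, j' x < κ := fun x => (e.symm x).2
    have hj'inj : Function.Injective j' := fun x y hxy =>
      e.symm.injective (Subtype.ext hxy)
    have hj'surj : ∀ c (hc : c < κ), j' (e ⟨c, hc⟩) = c := by
      intro c hc
      show ((e.symm (e ⟨c, hc⟩) : Set.Iio κ) : Ordinal.{u}) = c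
      rw [OrderIso.symm_apply_apply]
    set W : Set κ.ToType := {x | j' x ∈ D ∧ (j' x).cof = lam ∧ b (j' x) ≤ a} with hWdef
    by_cases hgood : ∃ x ∈ W, ∃ y ∈ W, j' x < j' y ∧ ∀ ζ < ε, f ζ (j' x) = f ζ (j' y)
    · obtain ⟨x, hx, y, hy, hlt, heq⟩ := hgood
      exact ⟨j' x, hx.1, j' y, hy.1, hx.2.1, hy.2.1, hlt, heq⟩
    · exfalso
      set eε := (Ordinal.ToType.mk : Set.Iio ε ≃o ε.ToType) with heεdef
      set ea := (Ordinal.ToType.mk : Set.Iio a ≃o a.ToType) with headef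
      have hfa : ∀ x : ↥W, ∀ z : ε.ToType,
          f ((eε.symm z : Set.Iio ε) : Ordinal.{u}) (j' x.1) < a := by
        intro x z
        exact lt_of_lt_of_le (hfb _ _ (eε.symm z).2) x.2.2.2
      set trace : ↥W → (ε.ToType → a.ToType) :=
        fun x z => ea ⟨f ((eε.symm z : Set.Iio ε) : Ordinal.{u}) (j' x.1), hfa x z⟩
        with htracedef
      have htrinj : Function.Injective trace := by
        intro x y hxy
        by_contra hne
        have hjne : j' x.1 ≠ j' y.1 := fun hh => hne (Subtype.ext (hj'inj hh))
        have heqf : ∀ ζ < ε, f ζ (j' x.1) = f ζ (j' y.1) := by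
          intro ζ hζ
          have h1 := congrFun hxy (eε ⟨ζ, hζ⟩)
          have h2 := ea.injective h1
          have h3 := congrArg Subtype.val h2
          simpa using h3
        rcases hjne.lt_or_gt with h | h
        · exact hgood ⟨x.1, x.2, y.1, y.2, h, heqf⟩
        · exact hgood ⟨y.1, y.2, x.1, x.2, h, fun ζ hζ => (heqf ζ hζ).symm⟩
      have hcard : #↥W < κ.cof := by
        rw [hκcof]
        calc #↥W ≤ #(ε.ToType → a.ToType) := Cardinal.mk_le_of_injective htrinj
        _ = #a.ToType ^ #ε.ToType := (Cardinal.power_def _ _).symm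
        _ = a.card ^ ε.card := by rw [Cardinal.mk_toType, Cardinal.mk_toType]
        _ ≤ lam ^ ε.card := Cardinal.power_le_power_right (card_le_of_lt_succ_ord haκ)
        _ ≤ lam ^< lam := Cardinal.le_powerlt lam (Cardinal.lt_ord.1 hεlt)
        _ = lam := hpow
        _ < Order.succ lam := Order.lt_succ lam
      have hsup : (⨆ x : ↥W, j' x.1) < κ :=
        Ordinal.iSup_lt_ord hcard fun x => hj'κ _
      obtain ⟨i, ⟨hiD, hicof, hiba⟩, hile⟩ :=
        hunb ((⨆ x : ↥W, j' x.1) + 1) (hκlim.succ_lt hsup)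
      have hiκ : i < κ := hD.1 hiD
      have hxW : e ⟨i, hiκ⟩ ∈ W := by
        refine ⟨?_, ?_, ?_⟩ <;> rw [hj'surj i hiκ] <;> assumption
      have hle2 : j' (e ⟨i, hiκ⟩) ≤ ⨆ x : ↥W, j' x.1 :=
        Ordinal.le_iSup (fun x : ↥W => j' x.1) ⟨_, hxW⟩
      rw [hj'surj i hiκ] at hle2
      exact absurd (lt_of_le_of_lt hle2 (lt_of_lt_of_le (Order.lt_succ _) hile)) (not_lt.2 le_rfl)
  · exfalso
    push_neg at hA
    have hA' : ∀ a < κ, ∃ c < κ, ∀ i, i ∈ D → i.cof = lam → b i ≤ a → i < c := by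
      intro a ha
      obtain ⟨c, hcκ, hc⟩ := hA a ha
      refine ⟨c, hcκ, fun i h1 h2 h3 => ?_⟩
      exact hc i ⟨h1, h2, h3⟩
    set h : Ordinal.{u} → Ordinal.{u} :=
      fun a => if ha : a < κ then (hA' a ha).choose else 0 with hhdef
    have hh1 : ∀ a < κ, h a < κ := by
      intro a ha
      show (if ha' : a < κ then (hA' a ha').choose else 0) < κ
      rw [dif_pos ha]
      exact (hA' a ha).choose_spec.1
    have hh2 : ∀ a (ha : a < κ), ∀ i, i ∈ D → i.cof = lam → b i ≤ a → i < h a := by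
      intro a ha
      show ∀ i, i ∈ D → i.cof = lam → b i ≤ a →
        i < (if ha' : a < κ then (hA' a ha').choose else 0)
      rw [dif_pos ha]
      exact (hA' a ha).choose_spec.2
    obtain ⟨δ, hδD, hδcof, hδκ, hδcl⟩ := exists_closure_point hlam hregl D hD h hh1
    have hbδ : b δ < δ := hblt δ hδD hδcof
    have h1 : δ < h (b δ) := hh2 (b δ) (hbδ.trans hδκ) δ hδD hδcof le_rfl
    have h2 : h (b δ) < δ := hδcl (b δ) hbδ
    exact absurd (lt_trans h1 h2) (lt_irrefl δ)

end Lam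

/-- player II's copying play against the strategy `σq`, starting from `p`. -/
noncomputable def IIplay {P : Type v} (bot : P) (p : Ordinal.{u} → P)
    (σq : Ordinal.{u} → (Ordinal.{u} → Ordinal.{u} → P) → Ordinal.{u} → P) :
    Ordinal.{u} → Ordinal.{u} → P :=
  Ordinal.lt_wf.fix fun ζ ih =>
    if ζ = 0 then p else σq ζ fun ξ => if hξ : ξ < ζ then ih ξ hξ else fun _ => bot

theorem IIplay_eq {P : Type v} (bot : P) (p : Ordinal.{u} → P)
    (σq : Ordinal.{u} → (Ordinal.{u} → Ordinal.{u} → P) → Ordinal.{u} → P)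
    (ζ : Ordinal.{u}) :
    IIplay bot p σq ζ = if ζ = 0 then p
      else σq ζ fun ξ => if _ : ξ < ζ then IIplay bot p σq ξ else fun _ => bot :=
  Ordinal.lt_wf.fix_eq _ ζ

end StarCCAux

/-- The forcing notion `P` (a partial order with minimum `bot`) satisfies `*^ε_λ`:
player I has a winning strategy in the game of length `ε` in which, at move `ζ`,
player I chooses a sequence `⟨q_i^ζ : i < λ⁺⟩` of conditions dominating all earlier
moves of II together with a function `f_ζ : λ⁺ → λ⁺` regressive on `C_ζ ∩ S^{λ⁺}_λ`
for some club `C_ζ` (with `q_i^0 = ∅_P` and `f_0 ≡ 0`), and player II replies with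
`⟨p_i^ζ : i < λ⁺⟩`, `p_i^ζ ≥ q_i^ζ`; player I wins if on a club `E`, for all
`i < j` in `E ∩ S^{λ⁺}_λ` with `f_ζ(i) = f_ζ(j)` for all `ζ < ε`, the conditions
`{p_i^ζ, p_j^ζ : ζ < ε}` have a common upper bound.  A strategy is a pair of
functions producing I's moves from II's earlier moves. -/
def SatisfiesStar (lam : Cardinal) (ε : Ordinal) (P : Type*) [PartialOrder P]
    (bot : P) : Prop :=
  ∃ (σq : Ordinal → (Ordinal → Ordinal → P) → Ordinal → P)
    (σf : Ordinal → (Ordinal → Ordinal → P) → Ordinal → Ordinal),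
    -- the strategy depends only on the earlier moves of II
    (∀ ζ, ∀ p p' : Ordinal → Ordinal → P, (∀ ξ < ζ, p ξ = p' ξ) →
      σq ζ p = σq ζ p' ∧ σf ζ p = σf ζ p') ∧
    -- the first move of I
    (∀ p, σq 0 p = fun _ => bot) ∧ (∀ p, σf 0 p = fun _ => 0) ∧
    -- for every play `p` of II against the strategy in which II moves legally:
    ∀ p : Ordinal → Ordinal → P,
      (∀ ζ < ε, ∀ i < (Order.succ lam).ord, σq ζ p i ≤ p ζ i) →
      -- the moves of I are legal: they dominate the earlier moves of II,
      (∀ ζ < ε, ∀ ξ < ζ, ∀ i < (Order.succ lam).ord, p ξ i ≤ σq ζ p i) ∧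
      -- and the `f_ζ` are regressive on `C_ζ ∩ S^{λ⁺}_λ` for some club `C_ζ`;
      (∀ ζ < ε, ∃ C, IsClubIn (Order.succ lam).ord C ∧
        ∀ β ∈ C, β.cof = lam → σf ζ p β < β) ∧
      -- and player I wins the play:
      ∃ E, IsClubIn (Order.succ lam).ord E ∧
        ∀ i ∈ E, ∀ j ∈ E, Ordinal.cof i = lam → Ordinal.cof j = lam → i < j →
          (∀ ζ < ε, σf ζ p i = σf ζ p j) →
          ∃ r : P, (∀ ζ < ε, p ζ i ≤ r) ∧ ∀ ζ < ε, p ζ j ≤ r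

/-- If `λ > ℵ₀` satisfies `λ^{<λ} = λ`, `ε < λ` is a limit ordinal and the forcing
notion `P` satisfies `*^ε_λ`, then `P` satisfies the `λ⁺`-chain condition: among any
`λ⁺` conditions, two are compatible. -/
theorem star_implies_cc (lam : Cardinal) (hlam : Cardinal.aleph0 < lam)
    (hpow : Cardinal.powerlt lam lam = lam)
    (ε : Ordinal) (hεlim : Order.IsSuccLimit ε) (hεlt : ε < lam.ord)
    (P : Type*) [PartialOrder P] (bot : P) (hbot : ∀ x, bot ≤ x)
    (hstar : SatisfiesStar lam ε P bot)
    (p : Ordinal → P) :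
    ∃ i j, i < j ∧ j < (Order.succ lam).ord ∧ ∃ r, p i ≤ r ∧ p j ≤ r := by
  classical
  obtain ⟨σq, σf, hcoh, hq0, hf0, hplay⟩ := hstar
  set q := StarCCAux.IIplay bot p σq with hqdef
  have hqzero : q 0 = p := by
    rw [hqdef, StarCCAux.IIplay_eq, if_pos rfl]
  have hqsucc : ∀ ζ, ζ ≠ 0 → q ζ = σq ζ q := by
    intro ζ h0
    rw [hqdef, StarCCAux.IIplay_eq, if_neg h0]
    exact (hcoh ζ
      (fun ξ => if _ : ξ < ζ then StarCCAux.IIplay bot p σq ξ else fun _ => bot) q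
      fun ξ hξ => dif_pos hξ).1
  have hlegal : ∀ ζ < ε, ∀ i < (Order.succ lam).ord, σq ζ q i ≤ q ζ i := by
    intro ζ _ i _
    by_cases h0 : ζ = 0
    · subst h0
      have : σq 0 q = fun _ => bot := hq0 q
      rw [this]
      exact hbot _
    · rw [hqsucc ζ h0]
  obtain ⟨hdom, hreg, E, hE, hwin⟩ := hplay q hlegal
  choose C hC1 hC2 using hreg
  have hDclub : IsClubIn (Order.succ lam).ord
      (E ∩ {β | ∀ ζ (hζ : ζ < ε), β ∈ C ζ hζ}) :=
    StarCCAux.isClubIn_inter hlam hεlt hE hC1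
  obtain ⟨i, hiD, j, hjD, hicof, hjcof, hij, heqf⟩ :=
    StarCCAux.key_pair hlam hpow hεlim hεlt hDclub (fun ζ i => σf ζ q i)
      (fun ζ hζ i hiD hcof => hC2 ζ hζ i (hiD.2 ζ hζ) hcof)
  obtain ⟨r, hri, hrj⟩ := hwin i hiD.1 j hjD.1 hicof hjcof hij heqf
  refine ⟨i, j, hij, hE.1 hjD.1, r, ?_, ?_⟩
  · have := hri 0 hεlim.pos
    rwa [hqzero] at this
  · have := hrj 0 hεlim.pos
    rwa [hqzero] at this
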